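/- If z is a nonzero root of a polynomial p with non-negative integer coefficients, coefficient sum p(1) = n ≥ 2, and nonzero trailing and leading coefficients with at least two nonzero coefficients, then 1/(n−1) ≤ |z| ≤ n−1. -/

import Mathlib

open Polynomial Finset

theorem degree_root_modulus_bound (p : Polynomial ℕ) (n : ℕ) (hn : 2 ≤ n)
    (hsum : p.eval 1 = n) (hsupp : 2 ≤ p.support.card)
    (z : ℂ) (hz0 : z ≠ 0) (hz : Polynomial.aeval z p = 0) :
    1 / ((n : ℝ) - 1) ≤ ‖z‖ ∧ ‖z‖ ≤ (n : ℝ) - 1 := by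
  have hp0 : p ≠ 0 := by
    intro h; rw [h] at hsupp; simp at hsupp
  set d := p.natDegree with hd
  set t := p.natTrailingDegree with ht
  have htd : t < d := by
    rw [ht, hd, natTrailingDegree_eq_support_min' hp0, natDegree_eq_support_max' hp0]
    exact Finset.min'_lt_max'_of_card _ hsupp
  have hsum' : ∑ i ∈ range (d + 1), p.coeff i = n := by
    rw [← hsum, eval_eq_sum_range]
    simp
    rfl
  have E : ∑ i ∈ range (d + 1), (p.coeff i : ℂ) * z ^ i = 0 := by
    rw [← hz, aeval_def, eval₂_eq_sum_range]
    simp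
    rfl
  set r := ‖z‖ with hr
  have hr0 : 0 < r := by
    simpa [hr] using hz0
  have hn1 : (1 : ℝ) ≤ (n : ℝ) - 1 := by
    have : (2 : ℝ) ≤ (n : ℝ) := by exact_mod_cast hn
    linarith
  have hcd : 1 ≤ p.coeff d := by
    have h1 := Polynomial.leadingCoeff_ne_zero.mpr hp0
    rw [leadingCoeff] at h1
    exact Nat.one_le_iff_ne_zero.mpr h1
  have hct : 1 ≤ p.coeff t := by
    have h1 : p.trailingCoeff ≠ 0 := fun h => hp0 (Polynomial.trailingCoeff_eq_zero.mp h)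
    rw [trailingCoeff] at h1
    exact Nat.one_le_iff_ne_zero.mpr h1
  -- sum bound for upper
  have hBd : ∑ i ∈ range d, p.coeff i ≤ n - 1 := by
    rw [Finset.sum_range_succ] at hsum'
    omega
  have hBdR : (∑ i ∈ range d, (p.coeff i : ℝ)) ≤ (n : ℝ) - 1 := by
    have : ((∑ i ∈ range d, p.coeff i : ℕ) : ℝ) ≤ ((n - 1 : ℕ) : ℝ) := by exact_mod_cast hBd
    rw [Nat.cast_sub (by omega)] at this
    simpa using this
  -- sum bound for lower
  have hsplit : ∑ i ∈ range (t + 1), p.coeff i + ∑ i ∈ Ico (t + 1) (d + 1), p.coeff i = n := by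
    rw [← hsum']; simp only [Finset.range_eq_Ico]
    exact Finset.sum_Ico_consecutive _ (by omega) (by omega)
  have hBt : ∑ i ∈ Ico (t + 1) (d + 1), p.coeff i ≤ n - 1 := by
    have h1 : p.coeff t ≤ ∑ i ∈ range (t + 1), p.coeff i :=
      Finset.single_le_sum (fun i _ => Nat.zero_le _) (Finset.self_mem_range_succ t)
    omega
  have hBtR : (∑ i ∈ Ico (t + 1) (d + 1), (p.coeff i : ℝ)) ≤ (n : ℝ) - 1 := by
    have : ((∑ i ∈ Ico (t + 1) (d + 1), p.coeff i : ℕ) : ℝ) ≤ ((n - 1 : ℕ) : ℝ) := by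
      exact_mod_cast hBt
    rw [Nat.cast_sub (by omega)] at this
    simpa using this
  constructor
  · -- lower bound
    by_contra h
    push_neg at h
    have hr1 : r < 1 := lt_of_lt_of_le h (by rw [div_le_one (by linarith)]; exact hn1)
    have heq : (p.coeff t : ℂ) * z ^ t = -∑ i ∈ Ico (t + 1) (d + 1), (p.coeff i : ℂ) * z ^ i := by
      have hsplitC : ∑ i ∈ range (t + 1), (p.coeff i : ℂ) * z ^ i
          + ∑ i ∈ Ico (t + 1) (d + 1), (p.coeff i : ℂ) * z ^ i = 0 := by
        rw [← E]; simp only [Finset.range_eq_Ico]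
        exact Finset.sum_Ico_consecutive _ (by omega) (by omega)
      have hlow : ∑ i ∈ range (t + 1), (p.coeff i : ℂ) * z ^ i = (p.coeff t : ℂ) * z ^ t := by
        rw [Finset.sum_range_succ]
        have : ∑ i ∈ range t, (p.coeff i : ℂ) * z ^ i = 0 := by
          apply Finset.sum_eq_zero
          intro i hi
          rw [Polynomial.coeff_eq_zero_of_lt_natTrailingDegree (Finset.mem_range.mp hi)]
          simp
        rw [this, zero_add]
      rw [hlow] at hsplitC
      linear_combination hsplitC
    have key : r ^ t < r ^ t := by
      calc r ^ t ≤ (p.coeff t : ℝ) * r ^ t := by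
            refine le_mul_of_one_le_left (pow_nonneg hr0.le _) ?_
            exact_mod_cast hct
        _ = ‖(p.coeff t : ℂ) * z ^ t‖ := by
            rw [norm_mul, norm_pow, Complex.norm_natCast]
        _ = ‖∑ i ∈ Ico (t + 1) (d + 1), (p.coeff i : ℂ) * z ^ i‖ := by
            rw [heq, norm_neg]
        _ ≤ ∑ i ∈ Ico (t + 1) (d + 1), (p.coeff i : ℝ) * r ^ i := by
            refine le_trans (norm_sum_le _ _) (Finset.sum_le_sum fun i _ => ?_)
            rw [norm_mul, norm_pow, Complex.norm_natCast]
        _ ≤ ∑ i ∈ Ico (t + 1) (d + 1), (p.coeff i : ℝ) * r ^ (t + 1) := by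
            refine Finset.sum_le_sum fun i hi => ?_
            refine mul_le_mul_of_nonneg_left ?_ (Nat.cast_nonneg _)
            exact pow_le_pow_of_le_one hr0.le hr1.le (Finset.mem_Ico.mp hi).1
        _ = (∑ i ∈ Ico (t + 1) (d + 1), (p.coeff i : ℝ)) * r ^ (t + 1) := by rw [← Finset.sum_mul]
        _ ≤ ((n : ℝ) - 1) * r ^ (t + 1) :=
            mul_le_mul_of_nonneg_right hBtR (pow_nonneg hr0.le _)
        _ = (((n : ℝ) - 1) * r) * r ^ t := by rw [pow_succ]; ring
        _ < 1 * r ^ t := by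
            refine mul_lt_mul_of_pos_right ?_ (pow_pos hr0 t)
            rw [mul_comm]
            exact (lt_div_iff₀ (by linarith)).mp h
        _ = r ^ t := one_mul _
    exact absurd key (lt_irrefl _)
  · -- upper bound
    by_contra h
    push_neg at h
    have hr1 : 1 < r := lt_of_le_of_lt hn1 h
    have heq : (p.coeff d : ℂ) * z ^ d = -∑ i ∈ range d, (p.coeff i : ℂ) * z ^ i := by
      rw [Finset.sum_range_succ] at E
      linear_combination E
    have key : r ^ d < r ^ d := by
      calc r ^ d ≤ (p.coeff d : ℝ) * r ^ d := by
            refine le_mul_of_one_le_left (pow_nonneg hr0.le _) ?_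
            exact_mod_cast hcd
        _ = ‖(p.coeff d : ℂ) * z ^ d‖ := by
            rw [norm_mul, norm_pow, Complex.norm_natCast]
        _ = ‖∑ i ∈ range d, (p.coeff i : ℂ) * z ^ i‖ := by
            rw [heq, norm_neg]
        _ ≤ ∑ i ∈ range d, (p.coeff i : ℝ) * r ^ i := by
            refine le_trans (norm_sum_le _ _) (Finset.sum_le_sum fun i _ => ?_)
            rw [norm_mul, norm_pow, Complex.norm_natCast]
        _ ≤ ∑ i ∈ range d, (p.coeff i : ℝ) * r ^ (d - 1) := by
            refine Finset.sum_le_sum fun i hi => ?_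
            refine mul_le_mul_of_nonneg_left ?_ (Nat.cast_nonneg _)
            have := Finset.mem_range.mp hi
            exact pow_le_pow_right₀ hr1.le (by omega)
        _ = (∑ i ∈ range d, (p.coeff i : ℝ)) * r ^ (d - 1) := by rw [← Finset.sum_mul]
        _ ≤ ((n : ℝ) - 1) * r ^ (d - 1) :=
            mul_le_mul_of_nonneg_right hBdR (pow_nonneg hr0.le _)
        _ < r * r ^ (d - 1) := mul_lt_mul_of_pos_right h (pow_pos hr0 _)
        _ = r ^ d := by
            rw [← pow_succ']
            congr 1
            omega
    exact absurd key (lt_irrefl _)
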